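/- arXiv:2409.16034 — 3 statements merged into one kernel-verified Lean document; each statement's English description precedes it below -/
import Mathlib

section
/- Let $\{P_n\}$ be a monic polynomial set generated by $A(t)F(xtA(t)-R(t))=\sum_{n\ge0}\alpha_n P_n(x)t^n$ where $F(t)=\sum_{n\ge0}\alpha_n t^n$ with all $\alpha_n\neq 0$, $F(0)=A(0)=1$, $R(0)=0$. Write $A'(t)/A(t)=\sum_{n\ge0}S_n t^n$ and $R'(t)/A(t)=\sum_{n\ge0}R_n t^n$. Then for all $n\ge 1$: $\alpha_n x P_n'(x) - n\alpha_n P_n(x) = -\sum_{k=0}^{n-1} S_k \alpha_{n-k-1}[xP'_{n-k-1}(x)+P_{n-k-1}(x)] + \sum_{k=0}^{n-1} R_k \alpha_{n-k} P'_{n-k}(x)$. -/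
open Finset

/-- Formal composition `F ∘ u`, valid when `u` has zero constant term. -/
noncomputable def pscomp (F u : PowerSeries ℝ) : PowerSeries ℝ :=
  PowerSeries.mk fun m => ∑ n ∈ Finset.range (m + 1),
    (PowerSeries.coeff n F) * (PowerSeries.coeff m (u ^ n))

section Aux
open PowerSeries

variable {Q : Type*} [CommRing Q]

noncomputable def pscompg (f u : PowerSeries Q) : PowerSeries Q :=
  PowerSeries.mk fun m => ∑ n ∈ Finset.range (m + 1),
    (PowerSeries.coeff n f) * (PowerSeries.coeff m (u ^ n))

lemma pscompg_eq (F u : PowerSeries ℝ) : pscompg F u = pscomp F u := rfl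

lemma coeff_pow_zero {u : PowerSeries Q} (hu : constantCoeff u = 0)
    {m n : ℕ} (h : m < n) : coeff m (u ^ n) = 0 := by
  have hX : (X : PowerSeries Q) ^ n ∣ u ^ n := pow_dvd_pow_of_dvd (X_dvd_iff.2 hu) n
  exact (X_pow_dvd_iff.1 hX) m h

lemma coeff_pscompg_trunc {f u : PowerSeries Q} (hu : constantCoeff u = 0)
    {m N : ℕ} (hm : m < N) :
    coeff m (pscompg f u)
      = coeff m (∑ n ∈ range N, PowerSeries.C (coeff n f) * u ^ n) := by
  rw [map_sum]
  simp only [coeff_C_mul]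
  rw [pscompg, coeff_mk]
  apply Finset.sum_subset
  · exact Finset.range_subset_range.2 hm
  · intro n hn hn'
    rw [coeff_pow_zero hu (by simp at hn hn' ⊢; omega), mul_zero]

lemma coeff_mul_congr {v v' w : PowerSeries Q} {m : ℕ}
    (h : ∀ i, i ≤ m → coeff i v = coeff i v') :
    coeff m (v * w) = coeff m (v' * w) := by
  rw [coeff_mul, coeff_mul]
  refine Finset.sum_congr rfl fun p hp => ?_
  rw [Finset.HasAntidiagonal.mem_antidiagonal] at hp
  rw [h p.1 (by omega)]

lemma coeff_derivativeFun' (f : PowerSeries Q) (n : ℕ) :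
    coeff n (PowerSeries.derivativeFun f) = coeff (n + 1) f * (n + 1) :=
  PowerSeries.coeff_derivative f n

lemma dpow (d : PowerSeries Q → PowerSeries Q)
    (hmul : ∀ v w, d (v * w) = d v * w + v * d w)
    (u : PowerSeries Q) :
    ∀ n : ℕ, d (u ^ (n + 1)) = PowerSeries.C ((n : Q) + 1) * (u ^ n * d u) := by
  intro n
  induction n with
  | zero => simp [pow_one]
  | succ n ih =>
      have : u ^ (n + 2) = u * u ^ (n + 1) := by ring
      rw [this, hmul, ih]
      have hC : (PowerSeries.C ((n : Q) + 1 + 1)) = PowerSeries.C ((n : Q) + 1) + 1 := by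
        rw [map_add, map_one]
      push_cast
      rw [hC]
      ring

lemma d_one_eq_zero (d : PowerSeries Q → PowerSeries Q)
    (hmul : ∀ v w, d (v * w) = d v * w + v * d w) : d 1 = 0 := by
  have h := hmul 1 1
  rw [mul_one, mul_one, one_mul] at h
  exact (left_eq_add.mp h)

/-- derivative of a power series for the "fictional" variable of `f` -/
noncomputable def fder (f : PowerSeries Q) : PowerSeries Q :=
  PowerSeries.mk fun n => ((n : Q) + 1) * coeff (n + 1) f

lemma chain (d : PowerSeries Q → PowerSeries Q)
    (hsum : ∀ (N : ℕ) (g : ℕ → PowerSeries Q), d (∑ n ∈ range N, g n) = ∑ n ∈ range N, d (g n))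
    (hmul : ∀ v w, d (v * w) = d v * w + v * d w)
    (hwin : ∀ v w (m : ℕ), (∀ j, j ≤ m + 1 → coeff j v = coeff j w)
        → coeff m (d v) = coeff m (d w))
    (f u : PowerSeries Q) (hu : constantCoeff u = 0)
    (hf : ∀ n, d (PowerSeries.C (coeff n f)) = 0) :
    d (pscompg f u) = pscompg (fder f) u * d u := by
  ext m
  have h1 : coeff m (d (pscompg f u))
      = coeff m (d (∑ n ∈ range (m + 2), PowerSeries.C (coeff n f) * u ^ n)) := by
    apply hwin
    intro j hj
    exact coeff_pscompg_trunc hu (by omega)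
  rw [h1, hsum]
  have h2 : ∀ n ∈ range (m + 2), d (PowerSeries.C (coeff n f) * u ^ n)
      = PowerSeries.C (coeff n f) * d (u ^ n) := by
    intro n _
    rw [hmul, hf, zero_mul, zero_add]
  rw [Finset.sum_congr rfl h2, Finset.sum_range_succ']
  have h3 : d (u ^ 0) = 0 := by
    rw [pow_zero]; exact d_one_eq_zero d hmul
  rw [h3, mul_zero, add_zero]
  have h4 : ∀ n ∈ range (m + 1),
      PowerSeries.C (coeff (n + 1) f) * d (u ^ (n + 1))
      = (PowerSeries.C (coeff n (fder f)) * u ^ n) * d u := by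
    intro n _
    rw [dpow d hmul, fder, coeff_mk, map_mul]
    ring
  rw [Finset.sum_congr rfl h4, ← Finset.sum_mul]
  exact (coeff_mul_congr fun i hi => coeff_pscompg_trunc hu (by omega)).symm

lemma map_pscompg {Q' : Type*} [CommRing Q'] (φ : Q →+* Q') (f u : PowerSeries Q) :
    PowerSeries.map φ (pscompg f u) = pscompg (PowerSeries.map φ f) (PowerSeries.map φ u) := by
  ext m
  rw [coeff_map, pscompg, pscompg, coeff_mk, coeff_mk, map_sum]
  refine Finset.sum_congr rfl fun n _ => ?_
  rw [map_mul, ← coeff_map, ← coeff_map, ← map_pow]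

abbrev QR := Polynomial ℝ

/-- coefficientwise polynomial derivative -/
noncomputable def dX (f : PowerSeries QR) : PowerSeries QR :=
  PowerSeries.mk fun n => Polynomial.derivative (coeff n f)

lemma coeff_dX (f : PowerSeries QR) (n : ℕ) :
    coeff n (dX f) = Polynomial.derivative (coeff n f) := by
  rw [dX, coeff_mk]

lemma dX_add (f g : PowerSeries QR) : dX (f + g) = dX f + dX g := by
  ext n; simp [coeff_dX]

lemma dX_sub (f g : PowerSeries QR) : dX (f - g) = dX f - dX g := by
  ext n; simp [coeff_dX]

lemma dX_sum (N : ℕ) (g : ℕ → PowerSeries QR) :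
    dX (∑ n ∈ range N, g n) = ∑ n ∈ range N, dX (g n) := by
  ext m; simp [coeff_dX]

lemma dX_mul (f g : PowerSeries QR) : dX (f * g) = dX f * g + f * dX g := by
  ext n
  simp only [coeff_dX, map_add, coeff_mul, map_sum, Polynomial.derivative_mul]
  rw [← Finset.sum_add_distrib]

lemma dX_map (g : PowerSeries ℝ) : dX (PowerSeries.map (Polynomial.C : ℝ →+* QR) g) = 0 := by
  ext n; simp [coeff_dX, coeff_map]

lemma dX_X : dX (X : PowerSeries QR) = 0 := by
  ext n
  rw [coeff_dX, coeff_X]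
  split <;> simp

lemma dX_Cx : dX (PowerSeries.C Polynomial.X) = 1 := by
  ext n
  rw [coeff_dX, coeff_C, coeff_one]
  split <;> simp

lemma dT_chain (f u : PowerSeries QR) (hu : constantCoeff u = 0) :
    PowerSeries.derivativeFun (pscompg f u)
      = pscompg (fder f) u * PowerSeries.derivativeFun u := by
  apply chain
  · intro N g; ext m
    simp [coeff_derivativeFun', Finset.sum_mul]
  · intro v w
    rw [PowerSeries.derivativeFun_mul, smul_eq_mul, smul_eq_mul]; ring
  · intro v w m h
    rw [coeff_derivativeFun', coeff_derivativeFun', h (m+1) le_rfl]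
  · exact hu
  · intro n; exact PowerSeries.derivativeFun_C

lemma dX_C (q : QR) (hq : Polynomial.derivative q = 0) : dX (PowerSeries.C q) = 0 := by
  ext n; rw [coeff_dX, coeff_C]; split <;> simp [hq]

lemma dX_chain (f u : PowerSeries QR) (hu : constantCoeff u = 0)
    (hf : ∀ n, Polynomial.derivative (coeff n f) = 0) :
    dX (pscompg f u) = pscompg (fder f) u * dX u := by
  apply chain
  · exact dX_sum
  · exact dX_mul
  · intro v w m h
    rw [coeff_dX, coeff_dX, h m (by omega)]
  · exact hu
  · intro n; exact dX_C _ (hf n)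

theorem stmt0
    (A F R : PowerSeries ℝ) (α : ℕ → ℝ) (P : ℕ → Polynomial ℝ) (S Rc : ℕ → ℝ)
    (hA0 : PowerSeries.constantCoeff A = 1)
    (hR0 : PowerSeries.constantCoeff R = 0)
    (hF : F = PowerSeries.mk α)
    (hF0 : α 0 = 1)
    (hα : ∀ n, α n ≠ 0)
    (hP : ∀ n, (P n).Monic ∧ (P n).natDegree = n)
    -- `A'(t)/A(t) = ∑ S_n t^n`, encoded as `(∑ S_n t^n) * A = A'`
    (hS : PowerSeries.mk S * A
      = PowerSeries.mk fun n => ((n : ℝ) + 1) * PowerSeries.coeff (n + 1) A)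
    -- `R'(t)/A(t) = ∑ R_n t^n`, encoded as `(∑ R_n t^n) * A = R'`
    (hR : PowerSeries.mk Rc * A
      = PowerSeries.mk fun n => ((n : ℝ) + 1) * PowerSeries.coeff (n + 1) R)
    -- the generating function identity `A(t) F(x t A(t) - R(t)) = ∑ α_n P_n(x) t^n`
    (hGF : ∀ x : ℝ, A * pscomp F (PowerSeries.C x * PowerSeries.X * A - R)
      = PowerSeries.mk fun n => α n * (P n).eval x) :
    ∀ n : ℕ, 1 ≤ n → ∀ x : ℝ,
      α n * x * (Polynomial.derivative (P n)).eval x - (n : ℝ) * α n * (P n).eval x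
        = -(∑ k ∈ Finset.range n, S k * α (n - k - 1) *
              (x * (Polynomial.derivative (P (n - k - 1))).eval x + (P (n - k - 1)).eval x))
          + ∑ k ∈ Finset.range n, Rc k * α (n - k) *
              (Polynomial.derivative (P (n - k))).eval x := by
  set L : PowerSeries ℝ →+* PowerSeries QR :=
    PowerSeries.map (Polynomial.C : ℝ →+* QR) with hL
  set a : PowerSeries QR := L A with ha
  set r : PowerSeries QR := L R with hr
  set f : PowerSeries QR := L F with hfdef
  set s : PowerSeries QR := L (PowerSeries.mk S) with hs
  set rc : PowerSeries QR := L (PowerSeries.mk Rc) with hrc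
  set xh : PowerSeries QR := PowerSeries.C Polynomial.X with hxh
  set u : PowerSeries QR := xh * X * a - r with hu
  set Fc : PowerSeries QR := pscompg f u with hFc
  set Fl : PowerSeries QR := pscompg (fder f) u with hFl
  set G : PowerSeries QR := a * Fc with hG
  -- constant coefficient of u is zero
  have h_u0 : constantCoeff u = 0 := by
    rw [hu]
    simp only [map_sub, map_mul, PowerSeries.constantCoeff_X, mul_zero, zero_mul, zero_sub,
      neg_eq_zero, hr, hL]
    rw [← PowerSeries.coeff_zero_eq_constantCoeff_apply, PowerSeries.coeff_map,
      PowerSeries.coeff_zero_eq_constantCoeff, hR0, map_zero]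
  -- coefficients of G
  have hGQ : ∀ n, coeff n G = Polynomial.C (α n) * P n := by
    intro n
    apply Polynomial.funext
    intro x
    have hev : ∀ q : PowerSeries QR,
        Polynomial.eval x (coeff n q)
          = PowerSeries.coeff n (PowerSeries.map (Polynomial.evalRingHom x) q) := by
      intro q; rw [PowerSeries.coeff_map]; rfl
    have hLid : ∀ g : PowerSeries ℝ,
        PowerSeries.map (Polynomial.evalRingHom x) (L g) = g := by
      intro g; ext j
      simp [hL, PowerSeries.coeff_map]
    have hxh' : PowerSeries.map (Polynomial.evalRingHom x) xh = PowerSeries.C x := by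
      ext j
      rw [PowerSeries.coeff_map, hxh]
      rw [PowerSeries.coeff_C, PowerSeries.coeff_C]
      split <;> simp
    have hmapu : PowerSeries.map (Polynomial.evalRingHom x) u
        = PowerSeries.C x * X * A - R := by
      rw [hu, map_sub, map_mul, map_mul, hxh', hLid, hLid]
      congr 1
      ext j
      simp [PowerSeries.coeff_map, PowerSeries.coeff_X]
    have hmapG : PowerSeries.map (Polynomial.evalRingHom x) G
        = PowerSeries.mk fun n => α n * (P n).eval x := by
      rw [hG, map_mul, hFc, map_pscompg, hmapu, hLid, hLid, pscompg_eq, hGF]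
    rw [hev, hmapG]
    simp [PowerSeries.coeff_mk]
  -- t-derivative facts
  have hLmk : ∀ (g : ℕ → ℝ), L (PowerSeries.mk g)
      = PowerSeries.mk fun n => Polynomial.C (g n) := by
    intro g; ext j; simp [hL, PowerSeries.coeff_map]
  have hdta : PowerSeries.derivativeFun a = s * a := by
    have h1 : s * a = L (PowerSeries.mk S * A) := by rw [map_mul]
    rw [h1, hS]
    ext j
    rw [coeff_derivativeFun', ha, hL, PowerSeries.coeff_map,
      PowerSeries.coeff_map, PowerSeries.coeff_mk, map_mul, map_add, map_one,
      map_natCast]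
    ring
  have hdtr : PowerSeries.derivativeFun r = rc * a := by
    have h1 : rc * a = L (PowerSeries.mk Rc * A) := by rw [map_mul]
    rw [h1, hR]
    ext j
    rw [coeff_derivativeFun', hr, hL, PowerSeries.coeff_map,
      PowerSeries.coeff_map, PowerSeries.coeff_mk, map_mul, map_add, map_one,
      map_natCast]
    ring
  have hdmul : ∀ v w : PowerSeries QR, PowerSeries.derivativeFun (v * w)
      = PowerSeries.derivativeFun v * w + v * PowerSeries.derivativeFun w := by
    intro v w
    rw [PowerSeries.derivativeFun_mul, smul_eq_mul, smul_eq_mul]; ring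
  have hdtxh : PowerSeries.derivativeFun xh = 0 := by
    rw [hxh]; exact PowerSeries.derivativeFun_C
  have hdtX : PowerSeries.derivativeFun (X : PowerSeries QR) = 1 := by
    ext j
    rw [coeff_derivativeFun', PowerSeries.coeff_X, PowerSeries.coeff_one]
    split <;> simp_all
  have hdtu : PowerSeries.derivativeFun u = xh * a + xh * X * (s * a) - rc * a := by
    rw [hu]
    have : xh * X * a - r = xh * (X * a) - r := by ring
    have hdsub : ∀ v w : PowerSeries QR, PowerSeries.derivativeFun (v - w)
        = PowerSeries.derivativeFun v - PowerSeries.derivativeFun w := by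
      intro v w; ext j
      simp [coeff_derivativeFun', map_sub, sub_mul]
    rw [this, hdsub, hdmul, hdmul, hdtxh, hdtX, hdta, hdtr]
    ring
  -- x-derivative facts
  have hdxa : dX a = 0 := by rw [ha, hL]; exact dX_map A
  have hdxr : dX r = 0 := by rw [hr, hL]; exact dX_map R
  have hdxu : dX u = X * a := by
    rw [hu]
    have e : xh * X * a - r = xh * (X * a) - r := by ring
    rw [e, dX_sub, dX_mul, dX_mul, dX_Cx, dX_X, hdxa, hdxr]
    ring
  have hfc : ∀ n, Polynomial.derivative (coeff n f) = 0 := by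
    intro n; rw [hfdef, hL, PowerSeries.coeff_map]; simp
  have hchainX : dX Fc = Fl * (X * a) := by
    rw [hFc, dX_chain f u h_u0 hfc, ← hFl, ← hdxu]
  have hchainT : PowerSeries.derivativeFun Fc
      = Fl * (xh * a + xh * X * (s * a) - rc * a) := by
    rw [hFc, dT_chain f u h_u0, ← hFl, ← hdtu]
  have hdXG : dX G = X * (a * a) * Fl := by
    rw [hG, dX_mul, hdxa, hchainX]
    ring
  have hdTG : PowerSeries.derivativeFun G
      = s * a * Fc + a * (Fl * (xh * a + xh * X * (s * a) - rc * a)) := by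
    rw [hG, hdmul, hdta, hchainT]
  -- the key series identity
  have key : xh * dX G - X * PowerSeries.derivativeFun G
      = -(X * (s * (G + xh * dX G))) + rc * dX G := by
    rw [hdXG, hdTG, hG]
    ring
  -- coefficient facts
  have hdXGc : ∀ j, coeff j (dX G) = Polynomial.C (α j) * Polynomial.derivative (P j) := by
    intro j
    rw [coeff_dX, hGQ]
    simp
  have hsc : ∀ k, coeff k s = Polynomial.C (S k) := by
    intro k; rw [hs, hL, PowerSeries.coeff_map, PowerSeries.coeff_mk]
  have hrcc : ∀ k, coeff k rc = Polynomial.C (Rc k) := by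
    intro k; rw [hrc, hL, PowerSeries.coeff_map, PowerSeries.coeff_mk]
  intro n hn x
  obtain ⟨m, rfl⟩ : ∃ m, n = m + 1 := ⟨n - 1, by omega⟩
  have hkey := congrArg (coeff (m + 1)) key
  rw [map_sub, map_add, map_neg, hxh, PowerSeries.coeff_C_mul,
    PowerSeries.coeff_succ_X_mul, PowerSeries.coeff_succ_X_mul,
    coeff_derivativeFun', hGQ, hdXGc, PowerSeries.coeff_mul,
    PowerSeries.coeff_mul, Finset.Nat.sum_antidiagonal_eq_sum_range_succ_mk,
    Finset.Nat.sum_antidiagonal_eq_sum_range_succ_mk] at hkey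
  simp only [hsc, hrcc, map_add, hGQ, hdXGc, hxh, PowerSeries.coeff_C_mul] at hkey
  have hP0 : P 0 = 1 := (hP 0).1.natDegree_eq_zero.mp (hP 0).2
  have hE := congrArg (Polynomial.eval x) hkey
  simp only [Nat.succ_eq_add_one, Nat.add_sub_cancel, hP0, Polynomial.derivative_one,
    mul_zero, add_zero, Polynomial.eval_sub, Polynomial.eval_mul, Polynomial.eval_add,
    Polynomial.eval_neg, Polynomial.eval_C, Polynomial.eval_X, Polynomial.eval_finset_sum,
    Polynomial.eval_natCast, Polynomial.eval_one] at hE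
  rw [Finset.sum_range_succ (fun k => Rc k * (α (m + 1 - k)
      * Polynomial.eval x (Polynomial.derivative (P (m + 1 - k)))))] at hE
  simp only [Nat.sub_self, hP0, Polynomial.derivative_one, Polynomial.eval_zero,
    mul_zero, add_zero] at hE
  have g1 : ∑ k ∈ range (m + 1), S k * α (m + 1 - k - 1) *
        (x * Polynomial.eval x (Polynomial.derivative (P (m + 1 - k - 1)))
          + Polynomial.eval x (P (m + 1 - k - 1)))
      = ∑ k ∈ range (m + 1), S k * (α (m - k) * Polynomial.eval x (P (m - k))
          + x * (α (m - k) * Polynomial.eval x (Polynomial.derivative (P (m - k))))) := by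
    refine Finset.sum_congr rfl fun k _ => ?_
    rw [show m + 1 - k - 1 = m - k by omega]
    ring
  have g2 : ∑ k ∈ range (m + 1), Rc k * α (m + 1 - k) *
        Polynomial.eval x (Polynomial.derivative (P (m + 1 - k)))
      = ∑ k ∈ range (m + 1), Rc k * (α (m + 1 - k) *
        Polynomial.eval x (Polynomial.derivative (P (m + 1 - k)))) := by
    refine Finset.sum_congr rfl fun k _ => ?_
    ring
  rw [g1, g2]
  push_cast
  linear_combination hE

end Aux
end

section
/- For any scalar $\rho$, the bilateral generating function $\sum_{n\ge 0}2^n U_n(\rho)\,U_n(x)\,t^n=\dfrac{4-t^2}{4-8\rho xt+(4\rho^2+4x^2-2)t^2-2\rho x t^3+\tfrac{t^4}{4}}$ holds as a formal power series identity in $t$. -/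
open Finset PowerSeries

noncomputable def chebU : ℕ → Polynomial ℝ
  | 0 => 1
  | 1 => Polynomial.X
  | (n + 2) => Polynomial.X * chebU (n + 1) - Polynomial.C (1/4 : ℝ) * chebU n

lemma rec4 (ρ x : ℝ) (n : ℕ) :
    4 * ((2:ℝ)^(n+4) * (chebU (n+4)).eval ρ * (chebU (n+4)).eval x)
      - 8*ρ*x * ((2:ℝ)^(n+3) * (chebU (n+3)).eval ρ * (chebU (n+3)).eval x)
      + (4*ρ^2+4*x^2-2) * ((2:ℝ)^(n+2) * (chebU (n+2)).eval ρ * (chebU (n+2)).eval x)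
      - 2*ρ*x * ((2:ℝ)^(n+1) * (chebU (n+1)).eval ρ * (chebU (n+1)).eval x)
      + 1/4 * ((2:ℝ)^n * (chebU n).eval ρ * (chebU n).eval x) = 0 := by
  simp only [chebU, Polynomial.eval_sub, Polynomial.eval_mul, Polynomial.eval_X,
    Polynomial.eval_C]
  ring

lemma coeffCX (f : PowerSeries ℝ) (c : ℝ) (k n : ℕ) :
    PowerSeries.coeff n (f * (PowerSeries.C c * PowerSeries.X ^ k)) =
      if k ≤ n then c * PowerSeries.coeff (n - k) f else 0 := by
  rw [show f * (PowerSeries.C c * PowerSeries.X ^ k)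
      = PowerSeries.C c * (f * PowerSeries.X ^ k) by ring,
    PowerSeries.coeff_C_mul, PowerSeries.coeff_mul_X_pow']
  split <;> simp

lemma coeffCX1 (f : PowerSeries ℝ) (c : ℝ) (n : ℕ) :
    PowerSeries.coeff n (f * (PowerSeries.C c * PowerSeries.X)) =
      if 1 ≤ n then c * PowerSeries.coeff (n - 1) f else 0 := by
  simpa using coeffCX f c 1 n

/-- Bilateral generating function
`∑ 2ⁿ U_n(ρ) U_n(x) tⁿ = (4 - t²)/(4 - 8ρxt + (4ρ² + 4x² - 2)t² - 2ρxt³ + t⁴/4)`. -/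
theorem stmt7 (ρ x : ℝ) :
    (PowerSeries.mk fun n => (2 : ℝ) ^ n * (chebU n).eval ρ * (chebU n).eval x)
      = (PowerSeries.C (R := ℝ) 4 - PowerSeries.X ^ 2) *
          (PowerSeries.C (R := ℝ) 4 - PowerSeries.C (R := ℝ) (8 * ρ * x) * PowerSeries.X
            + PowerSeries.C (R := ℝ) (4 * ρ ^ 2 + 4 * x ^ 2 - 2) * PowerSeries.X ^ 2
            - PowerSeries.C (R := ℝ) (2 * ρ * x) * PowerSeries.X ^ 3
            + PowerSeries.C (R := ℝ) (1/4) * PowerSeries.X ^ 4)⁻¹ := by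
  rw [PowerSeries.eq_mul_inv_iff_mul_eq]
  · ext n
    simp only [mul_add, mul_sub, LinearMap.map_add, LinearMap.map_sub,
      coeffCX, coeffCX1, PowerSeries.coeff_mul_C, PowerSeries.coeff_mk,
      PowerSeries.coeff_C, PowerSeries.coeff_X_pow]
    match n with
    | 0 => norm_num [chebU]
    | 1 => norm_num [chebU]; ring
    | 2 => norm_num [chebU]; ring
    | 3 => norm_num [chebU]; ring
    | (n+4) =>
      have h := rec4 ρ x n
      simp only [show (1:ℕ) ≤ n+4 by omega, show (2:ℕ) ≤ n+4 by omega,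
        show (3:ℕ) ≤ n+4 by omega, show (4:ℕ) ≤ n+4 by omega, if_true,
        show n+4-1 = n+3 from rfl, show n+4-2 = n+2 from rfl,
        show n+4-3 = n+1 from rfl, show n+4-4 = n from rfl,
        show n+4 ≠ 0 by omega, show ¬(n+4 = 2) by omega, if_false]
      linarith [h]
  · simp [PowerSeries.constantCoeff_X]
end

section
/- For any scalar $\rho$, $\sum_{n\ge 1}2^n U_{n-1}(\rho)\,U_n(x)\,t^n=\dfrac{4(2xt-\rho t^2)}{4-8\rho xt+(4\rho^2+4x^2-2)t^2-2\rho x t^3+\tfrac{t^4}{4}}$ as formal power series in $t$. -/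
open Finset

lemma chebU_eval_rec (y : ℝ) (n : ℕ) :
    (chebU (n + 2)).eval y = y * (chebU (n + 1)).eval y - (1/4) * (chebU n).eval y := by
  simp [chebU]

lemma key_id (x ρ u0 u1 u2 u3 u4 u5 v0 v1 v2 v3 v4 : ℝ)
    (h2 : u2 = x * u1 - 1/4 * u0) (h3 : u3 = x * u2 - 1/4 * u1)
    (h4 : u4 = x * u3 - 1/4 * u2) (h5 : u5 = x * u4 - 1/4 * u3)
    (g2 : v2 = ρ * v1 - 1/4 * v0) (g3 : v3 = ρ * v2 - 1/4 * v1)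
    (g4 : v4 = ρ * v3 - 1/4 * v2) :
    64 * (v4 * u5) - 64 * ρ * x * (v3 * u4) + (16 * ρ^2 + 16 * x^2 - 8) * (v2 * u3)
      - 4 * ρ * x * (v1 * u2) + 1/4 * (v0 * u1) = 0 := by
  subst h5 h4 h3 h2 g4 g3 g2; ring

/-- `∑_{n≥1} 2ⁿ U_{n-1}(ρ) U_n(x) tⁿ
  = 4(2xt - ρt²)/(4 - 8ρxt + (4ρ² + 4x² - 2)t² - 2ρxt³ + t⁴/4)`. -/
theorem stmt8 (ρ x : ℝ) :
    (PowerSeries.mk fun n =>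
        if n = 0 then 0 else (2 : ℝ) ^ n * (chebU (n - 1)).eval ρ * (chebU n).eval x)
      = (PowerSeries.C (R := ℝ) (8 * x) * PowerSeries.X - PowerSeries.C (R := ℝ) (4 * ρ) * PowerSeries.X ^ 2) *
          (PowerSeries.C (R := ℝ) 4 - PowerSeries.C (R := ℝ) (8 * ρ * x) * PowerSeries.X
            + PowerSeries.C (R := ℝ) (4 * ρ ^ 2 + 4 * x ^ 2 - 2) * PowerSeries.X ^ 2
            - PowerSeries.C (R := ℝ) (2 * ρ * x) * PowerSeries.X ^ 3
            + PowerSeries.C (R := ℝ) (1/4) * PowerSeries.X ^ 4)⁻¹ := by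
  set a : ℕ → ℝ := fun n =>
    if n = 0 then 0 else (2 : ℝ) ^ n * (chebU (n - 1)).eval ρ * (chebU n).eval x with ha
  set c1 : ℝ := 8 * ρ * x with hc1
  set c2 : ℝ := 4 * ρ ^ 2 + 4 * x ^ 2 - 2 with hc2
  set c3 : ℝ := 2 * ρ * x with hc3
  set n1 : ℝ := 8 * x with hn1
  set n2 : ℝ := 4 * ρ with hn2
  rw [PowerSeries.eq_mul_inv_iff_mul_eq]
  swap
  · simp
  have hS : ∀ (c : ℝ) (k n : ℕ),
      (PowerSeries.coeff (R := ℝ) n) (PowerSeries.mk a * (PowerSeries.C (R := ℝ) c * PowerSeries.X ^ k)) =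
        c * (if k ≤ n then a (n - k) else 0) := by
    intro c k n
    rw [mul_left_comm, PowerSeries.coeff_C_mul, PowerSeries.coeff_mul_X_pow']
    split <;> simp
  have hX : (PowerSeries.X : PowerSeries ℝ) = PowerSeries.X ^ 1 := (pow_one _).symm
  have hC4 : (PowerSeries.C (R := ℝ) 4 : PowerSeries ℝ) =
      PowerSeries.C (R := ℝ) 4 * PowerSeries.X ^ 0 := by simp
  rw [hX, hC4]
  ext n
  rw [mul_add, mul_sub, mul_add, mul_sub]
  simp only [← pow_mul, one_mul, map_add, map_sub, hS, PowerSeries.coeff_C_mul,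
    PowerSeries.coeff_X_pow]
  match n with
  | 0 => norm_num [ha]
  | 1 => norm_num [ha, hc1, hn1, chebU]; ring
  | 2 => norm_num [ha, hc1, hc2, hn2, chebU]; ring
  | 3 => norm_num [ha, hc1, hc2, hc3, chebU]; ring
  | 4 => norm_num [ha, hc1, hc2, hc3, chebU]; ring
  | (m + 5) =>
    have t0 : (0:ℕ) ≤ m + 5 := by omega
    have t1 : (1:ℕ) ≤ m + 5 := by omega
    have t2 : (2:ℕ) ≤ m + 5 := by omega
    have t3 : (3:ℕ) ≤ m + 5 := by omega
    have t4 : (4:ℕ) ≤ m + 5 := by omega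
    rw [if_pos t0, if_pos t1, if_pos t2, if_pos t3, if_pos t4,
      if_neg (by omega : ¬ (m + 5 = 1)), if_neg (by omega : ¬ (m + 5 = 2))]
    have e0 : m + 5 - 0 = m + 5 := by omega
    have e1 : m + 5 - 1 = m + 4 := by omega
    have e2 : m + 5 - 2 = m + 3 := by omega
    have e3 : m + 5 - 3 = m + 2 := by omega
    have e4 : m + 5 - 4 = m + 1 := by omega
    rw [e0, e1, e2, e3, e4]
    have hav : ∀ k, a (k + 1) = (2:ℝ) ^ (k+1) * (chebU k).eval ρ * (chebU (k+1)).eval x := by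
      intro k; simp [ha]
    rw [show m + 5 = (m + 4) + 1 from rfl, hav, show m + 4 = (m + 3) + 1 from rfl, hav,
      show m + 3 = (m + 2) + 1 from rfl, hav, show m + 2 = (m + 1) + 1 from rfl, hav,
      hav]
    have key := key_id x ρ ((chebU m).eval x) ((chebU (m+1)).eval x) ((chebU (m+2)).eval x)
      ((chebU (m+3)).eval x) ((chebU (m+4)).eval x) ((chebU (m+5)).eval x)
      ((chebU m).eval ρ) ((chebU (m+1)).eval ρ) ((chebU (m+2)).eval ρ)
      ((chebU (m+3)).eval ρ) ((chebU (m+4)).eval ρ)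
      (chebU_eval_rec x m) (chebU_eval_rec x (m+1)) (chebU_eval_rec x (m+2))
      (chebU_eval_rec x (m+3)) (chebU_eval_rec ρ m) (chebU_eval_rec ρ (m+1))
      (chebU_eval_rec ρ (m+2))
    have hp5 : (2:ℝ)^(m+4+1) = 16 * 2^(m+1) := by ring
    have hp4 : (2:ℝ)^(m+3+1) = 8 * 2^(m+1) := by ring
    have hp3 : (2:ℝ)^(m+2+1) = 4 * 2^(m+1) := by ring
    have hp2 : (2:ℝ)^(m+1+1) = 2 * 2^(m+1) := by ring
    rw [hp5, hp4, hp3, hp2, hc1, hc2, hc3]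
    linear_combination (2:ℝ)^(m+1) * key
end
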